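/- Let G be the 2n×2n block matrix G = [[−ηC_β, −ηA], [Aᵀ − C, −A]] where C_β = C + βI, η, β > 0, and C is positive semidefinite (so C_β + λI is invertible whenever needed). Then for any λ ∈ ℂ, det(G − λI) = det( λ(ηC + (ηβ + λ)I) + A(ηAᵀ + (ηβ + λ)I) ). -/

import Mathlib

open Matrix Complex

lemma det_swapBlocks (n : ℕ) :
    (Matrix.fromBlocks (0 : Matrix (Fin n) (Fin n) ℂ) (1 : Matrix (Fin n) (Fin n) ℂ)
      (1 : Matrix (Fin n) (Fin n) ℂ) (0 : Matrix (Fin n) (Fin n) ℂ)).det = (-1 : ℂ) ^ n := by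
  have h : (Matrix.fromBlocks (1 : Matrix (Fin n) (Fin n) ℂ) (1 : Matrix (Fin n) (Fin n) ℂ)
        (0 : Matrix (Fin n) (Fin n) ℂ) (1 : Matrix (Fin n) (Fin n) ℂ)) *
      (Matrix.fromBlocks 1 0 (-1) 1) * (Matrix.fromBlocks 1 1 0 1) *
      (Matrix.fromBlocks (-1) 0 0 1) = Matrix.fromBlocks 0 1 1 0 := by
    simp [Matrix.fromBlocks_multiply]
  rw [← h, Matrix.det_mul, Matrix.det_mul, Matrix.det_mul,
    Matrix.det_fromBlocks_zero₂₁, Matrix.det_fromBlocks_zero₁₂,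
    Matrix.det_fromBlocks_zero₂₁]
  simp [Matrix.det_neg]

lemma det_fromBlocks_smul_one (n : ℕ) (c : ℂ) (P R S : Matrix (Fin n) (Fin n) ℂ) :
    (Matrix.fromBlocks P (c • 1) R S).det = (S * P - c • R).det := by
  rcases eq_or_ne c 0 with rfl | hc
  · rw [zero_smul, zero_smul, sub_zero, Matrix.det_fromBlocks_zero₁₂, Matrix.det_mul, mul_comm]
  · haveI : Invertible (c • (1 : Matrix (Fin n) (Fin n) ℂ)) :=
      invertibleOfLeftInverse _ (c⁻¹ • 1)
        (by rw [Matrix.smul_mul, Matrix.mul_smul, Matrix.one_mul, smul_smul,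
          inv_mul_cancel₀ hc, one_smul])
    have hinv : ⅟ (c • (1 : Matrix (Fin n) (Fin n) ℂ)) = c⁻¹ • 1 :=
      invOf_eq_right_inv (by rw [Matrix.smul_mul, Matrix.mul_smul, Matrix.one_mul, smul_smul,
        mul_inv_cancel₀ hc, one_smul])
    have hmul : (Matrix.fromBlocks P (c • 1) R S) *
        (Matrix.fromBlocks (0 : Matrix (Fin n) (Fin n) ℂ) 1 1 0)
        = Matrix.fromBlocks (c • 1) P S R := by
      simp [Matrix.fromBlocks_multiply]
    have hd : (Matrix.fromBlocks P (c • 1) R S).det * (-1 : ℂ) ^ n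
        = (c • R - S * P).det := by
      rw [← det_swapBlocks n, ← Matrix.det_mul, hmul, Matrix.det_fromBlocks₁₁, hinv]
      rw [Matrix.det_smul, Matrix.det_one, mul_one, Matrix.mul_smul, Matrix.smul_mul,
        Matrix.mul_one, Fintype.card_fin]
      have h2 : (c • (R - c⁻¹ • (S * P))).det = c ^ n * (R - c⁻¹ • (S * P)).det := by
        rw [Matrix.det_smul, Fintype.card_fin]
      rw [← h2, smul_sub, smul_smul, mul_inv_cancel₀ hc, one_smul]
    have hsq : ((-1 : ℂ) ^ n) * ((-1 : ℂ) ^ n) = 1 := by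
      rw [← pow_add]; exact (neg_one_pow_eq_one_iff_even (by norm_num)).2 (Even.add_self n)
    calc (Matrix.fromBlocks P (c • 1) R S).det
        = (Matrix.fromBlocks P (c • 1) R S).det * ((-1 : ℂ) ^ n * (-1 : ℂ) ^ n) := by
          rw [hsq, mul_one]
      _ = ((c • R - S * P).det) * (-1 : ℂ) ^ n := by rw [← mul_assoc, hd]
      _ = (S * P - c • R).det := by
          have h3 : ((-1 : ℂ)) ^ n * (c • R - S * P).det = (-(c • R - S * P)).det := by
            rw [Matrix.det_neg, Fintype.card_fin]
          rw [mul_comm, h3, neg_sub]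

/-- Determinant identity for the TDRC expected update matrix
`G = [[−ηC_β, −ηA], [Aᵀ − C, −A]]`: for any `λ ∈ ℂ`,
`det(G − λI) = det(λ(ηC + (ηβ + λ)I) + A(ηAᵀ + (ηβ + λ)I))`. -/
theorem tdrc_det_identity {n : ℕ} (A C : Matrix (Fin n) (Fin n) ℝ)
    (hC : C.PosSemidef) (η β : ℝ) (hη : 0 < η) (hβ : 0 < β) (lam : ℂ) :
    ((Matrix.fromBlocks
        (-(η • (C + β • (1 : Matrix (Fin n) (Fin n) ℝ)))) (-(η • A))
        (Aᵀ - C) (-A)).map (Complex.ofReal) - lam • 1).det =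
      (lam • ((η : ℂ) • (C.map Complex.ofReal) + ((η : ℂ) * (β : ℂ) + lam) • 1) +
        (A.map Complex.ofReal) *
          ((η : ℂ) • (A.map Complex.ofReal)ᵀ + ((η : ℂ) * (β : ℂ) + lam) • 1)).det := by
  set Ac := A.map Complex.ofReal with hAc
  set Cc := C.map Complex.ofReal with hCc
  set s : ℂ := (η : ℂ) * (β : ℂ) + lam with hs
  have hM : (Matrix.fromBlocks
        (-(η • (C + β • (1 : Matrix (Fin n) (Fin n) ℝ)))) (-(η • A))
        (Aᵀ - C) (-A)).map (Complex.ofReal) - lam • 1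
      = Matrix.fromBlocks (-((η : ℂ) • Cc + s • 1)) (-((η : ℂ) • Ac)) (Acᵀ - Cc)
        (-(Ac + lam • 1)) := by
    ext i j
    cases i <;> cases j <;>
      simp [Matrix.one_apply, Matrix.map_apply, hs, hAc, hCc, Matrix.sub_apply,
        Matrix.add_apply, Matrix.neg_apply, Matrix.smul_apply, Matrix.transpose_apply,
        smul_eq_mul] <;>
      split_ifs <;> push_cast <;> ring
  have hL : (Matrix.fromBlocks (1 : Matrix (Fin n) (Fin n) ℂ) ((-(η : ℂ)) • 1) 0 1) *
      Matrix.fromBlocks (-((η : ℂ) • Cc + s • 1)) (-((η : ℂ) • Ac)) (Acᵀ - Cc)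
        (-(Ac + lam • 1))
      = Matrix.fromBlocks (-((η : ℂ) • Acᵀ + s • 1)) (((η : ℂ) * lam) • 1) (Acᵀ - Cc)
        (-(Ac + lam • 1)) := by
    rw [Matrix.fromBlocks_multiply]
    have h11 : (1 : Matrix (Fin n) (Fin n) ℂ) * (-((η : ℂ) • Cc + s • 1)) +
        ((-(η : ℂ)) • 1) * (Acᵀ - Cc) = -((η : ℂ) • Acᵀ + s • 1) := by
      rw [Matrix.one_mul, Matrix.smul_mul, Matrix.one_mul, hs]
      module
    have h12 : (1 : Matrix (Fin n) (Fin n) ℂ) * (-((η : ℂ) • Ac)) +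
        ((-(η : ℂ)) • 1) * (-(Ac + lam • 1)) = ((η : ℂ) * lam) • 1 := by
      rw [Matrix.one_mul, Matrix.smul_mul, Matrix.one_mul]
      module
    have h21 : (0 : Matrix (Fin n) (Fin n) ℂ) * (-((η : ℂ) • Cc + s • 1)) +
        1 * (Acᵀ - Cc) = Acᵀ - Cc := by
      rw [Matrix.zero_mul, Matrix.one_mul, zero_add]
    have h22 : (0 : Matrix (Fin n) (Fin n) ℂ) * (-((η : ℂ) • Ac)) +
        1 * (-(Ac + lam • 1)) = -(Ac + lam • 1) := by
      rw [Matrix.zero_mul, Matrix.one_mul, zero_add]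
    rw [h11, h12, h21, h22]
  have hdet1 : ((Matrix.fromBlocks (1 : Matrix (Fin n) (Fin n) ℂ) ((-(η : ℂ)) • 1) 0 1 :
        Matrix (Fin n ⊕ Fin n) (Fin n ⊕ Fin n) ℂ)).det
      = 1 := by
    rw [Matrix.det_fromBlocks_zero₂₁, Matrix.det_one, one_mul]
  rw [hM]
  have step : (Matrix.fromBlocks (-((η : ℂ) • Cc + s • 1)) (-((η : ℂ) • Ac)) (Acᵀ - Cc)
        (-(Ac + lam • 1))).det
      = (Matrix.fromBlocks (-((η : ℂ) • Acᵀ + s • 1)) (((η : ℂ) * lam) • 1) (Acᵀ - Cc)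
        (-(Ac + lam • 1))).det := by
    rw [← hL, Matrix.det_mul, hdet1, one_mul]
  rw [step, det_fromBlocks_smul_one]
  congr 1
  simp only [Matrix.neg_mul, Matrix.mul_neg, neg_neg, Matrix.add_mul, Matrix.mul_add,
    Matrix.mul_smul, Matrix.smul_mul, Matrix.mul_one, Matrix.one_mul, smul_smul]
  module
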